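/- Define f(x) = x+1, and for an integer k ≥ 2 define g: ℝ → ℝ by g(x) = (x−n)^{2^{((-1)^n k^{-n})}} + n for x ∈ [n, n+1), n ∈ ℤ. Then g is a homeomorphism of ℝ and f ∘ g ∘ f⁻¹ = g^{−k}. -/

import Mathlib

open Real

noncomputable def BSe (k : ℕ) (n : ℤ) : ℝ := (-1 : ℝ) ^ n * (k : ℝ) ^ (-n)

noncomputable def BSc (k : ℕ) (n : ℤ) : ℝ := (2 : ℝ) ^ (BSe k n)

lemma BSc_pos (k : ℕ) (n : ℤ) : 0 < BSc k n := rpow_pos_of_pos two_pos _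

noncomputable def BSphi (k : ℕ) (x : ℝ) : ℝ :=
  (x - (⌊x⌋ : ℝ)) ^ (BSc k ⌊x⌋) + (⌊x⌋ : ℝ)

lemma frac_nonneg' (x : ℝ) : 0 ≤ x - (⌊x⌋:ℝ) := sub_nonneg.mpr (Int.floor_le x)
lemma frac_lt_one' (x : ℝ) : x - (⌊x⌋:ℝ) < 1 := by linarith [Int.lt_floor_add_one x]

lemma BSphi_mem (k : ℕ) (x : ℝ) :
    (⌊x⌋:ℝ) ≤ BSphi k x ∧ BSphi k x < (⌊x⌋:ℝ) + 1 := by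
  unfold BSphi
  constructor
  · nlinarith [rpow_nonneg (frac_nonneg' x) (BSc k ⌊x⌋)]
  · have := rpow_lt_one (frac_nonneg' x) (frac_lt_one' x) (BSc_pos k ⌊x⌋)
    linarith

lemma floor_BSphi (k : ℕ) (x : ℝ) : ⌊BSphi k x⌋ = ⌊x⌋ := by
  have h := BSphi_mem k x
  exact Int.floor_eq_iff.mpr ⟨h.1, h.2⟩

lemma BSphi_strictMono (k : ℕ) : StrictMono (BSphi k) := by
  intro x y hxy
  rcases lt_or_eq_of_le (Int.floor_le_floor hxy.le) with h | h
  · have h1 := (BSphi_mem k x).2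
    have h2 := (BSphi_mem k y).1
    have : (⌊x⌋:ℝ) + 1 ≤ (⌊y⌋:ℝ) := by exact_mod_cast h
    linarith
  · unfold BSphi
    rw [h]
    have hlt : x - (⌊y⌋:ℝ) < y - (⌊y⌋:ℝ) := by linarith
    have := rpow_lt_rpow (h ▸ frac_nonneg' x) hlt (BSc_pos k ⌊y⌋)
    linarith

lemma BSphi_surj (k : ℕ) : Function.Surjective (BSphi k) := by
  intro y
  set n := ⌊y⌋ with hn
  refine ⟨(y - (n:ℝ)) ^ (BSc k n)⁻¹ + (n:ℝ), ?_⟩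
  have hcpos := BSc_pos k n
  have h0 : 0 ≤ (y - (n:ℝ)) ^ (BSc k n)⁻¹ := rpow_nonneg (frac_nonneg' y) _
  have h1 : (y - (n:ℝ)) ^ (BSc k n)⁻¹ < 1 :=
    rpow_lt_one (frac_nonneg' y) (frac_lt_one' y) (by positivity)
  have hfl : ⌊(y - (n:ℝ)) ^ (BSc k n)⁻¹ + (n:ℝ)⌋ = n := by
    rw [Int.floor_eq_iff]; exact ⟨by linarith, by linarith⟩
  unfold BSphi
  rw [hfl, add_sub_cancel_right, ← rpow_mul (frac_nonneg' y), inv_mul_cancel₀ hcpos.ne', rpow_one, ← hn]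
  ring

noncomputable def BSg (k : ℕ) : ℝ ≃o ℝ :=
  StrictMono.orderIsoOfSurjective (BSphi k) (BSphi_strictMono k) (BSphi_surj k)

lemma BSg_apply (k : ℕ) (x : ℝ) : BSg k x = BSphi k x := by
  simp [BSg]

lemma BSg_pow (k : ℕ) (m : ℕ) (x : ℝ) :
    ((BSg k) ^ m) x = (x - (⌊x⌋:ℝ)) ^ ((2:ℝ) ^ ((m : ℝ) * BSe k ⌊x⌋)) + (⌊x⌋:ℝ) := by
  induction m generalizing x with
  | zero => simp [rpow_one]
  | succ m ih =>
    have : ((BSg k) ^ (m+1)) x = ((BSg k) ^ m) (BSg k x) := by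
      rw [pow_succ]; rfl
    rw [this, ih, BSg_apply]
    have hfl : ⌊BSphi k x⌋ = ⌊x⌋ := floor_BSphi k x
    rw [hfl]
    have : BSphi k x - (⌊x⌋:ℝ) = (x - (⌊x⌋:ℝ)) ^ (BSc k ⌊x⌋) := by
      unfold BSphi; ring
    rw [this, ← rpow_mul (frac_nonneg' x), BSc, ← rpow_add two_pos]
    congr 2
    push_cast
    ring_nf

lemma BSe_pred (k : ℕ) (hk : 2 ≤ k) (n : ℤ) :
    BSe k (n - 1) = -((k:ℝ) * BSe k n) := by
  have hk0 : (k:ℝ) ≠ 0 := by positivity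
  have h1 : ((-1:ℝ)) ^ (n-1) = -((-1:ℝ))^n := by
    rw [zpow_sub₀ (by norm_num : (-1:ℝ) ≠ 0)]; field_simp
  have h2 : (k:ℝ) ^ (-(n-1)) = (k:ℝ) * (k:ℝ)^(-n) := by
    rw [show -(n-1) = 1 + -n by ring, zpow_add₀ hk0]; simp
  unfold BSe
  rw [h1, h2]; ring

open Real in
/-- For `k ≥ 2`, the map `g(x) = (x − n) ^ (2 ^ ((-1)ⁿ k⁻ⁿ)) + n` for `x ∈ [n, n+1)`
(`n = ⌊x⌋`) is an (orientation-preserving) homeomorphism of `ℝ`, and with `f(x) = x + 1`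
one has `f ∘ g ∘ f⁻¹ = g^(−k)`. -/
theorem stmt_7 (k : ℕ) (hk : 2 ≤ k) :
    ∃ g : ℝ ≃o ℝ,
      (∀ x : ℝ,
        g x = (x - ⌊x⌋) ^ ((2 : ℝ) ^ ((-1 : ℝ) ^ ⌊x⌋ * (k : ℝ) ^ (-⌊x⌋))) + ⌊x⌋) ∧
      ∀ x : ℝ, g (x - 1) + 1 = (g ^ (-(k : ℤ))) x := by
  refine ⟨BSg k, fun x => by rw [BSg_apply]; rfl, fun x => ?_⟩
  set n := ⌊x⌋ with hn
  -- compute g (x-1) + 1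
  have hfl1 : ⌊x - 1⌋ = n - 1 := by
    rw [hn, show (1:ℝ) = ((1:ℤ):ℝ) by norm_num, Int.floor_sub_intCast]
  have hy : BSg k (x - 1) + 1 = (x - (n:ℝ)) ^ (BSc k (n-1)) + (n:ℝ) := by
    rw [BSg_apply]
    unfold BSphi
    rw [hfl1]
    push_cast
    ring_nf
  -- bounds of the fractional part image
  have hb0 : 0 ≤ (x - (n:ℝ)) ^ (BSc k (n-1)) := rpow_nonneg (frac_nonneg' x) _
  have hb1 : (x - (n:ℝ)) ^ (BSc k (n-1)) < 1 :=
    rpow_lt_one (frac_nonneg' x) (frac_lt_one' x) (BSc_pos k _)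
  have hfly : ⌊(x - (n:ℝ)) ^ (BSc k (n-1)) + (n:ℝ)⌋ = n := by
    rw [Int.floor_eq_iff]
    constructor <;> linarith
  -- key: (g^k) (g(x-1)+1) = x
  have key : ((BSg k) ^ k) (BSg k (x - 1) + 1) = x := by
    rw [hy, BSg_pow, hfly, add_sub_cancel_right, ← rpow_mul (frac_nonneg' x),
      BSc, ← rpow_add two_pos, BSe_pred k hk, neg_add_cancel, rpow_zero, rpow_one]
    rw [hn]; ring
  have hz : ((BSg k) ^ (-(k:ℤ))) x = (((BSg k) ^ k)⁻¹) x := by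
    rw [zpow_neg, zpow_natCast]
  rw [hz]
  apply ((BSg k) ^ k).injective
  rw [RelIso.apply_inv_self, key]
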